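/- Let (u_t)_{t ≥ 1} be a sequence of non-negative reals, let σ ≥ 0, ε ≥ 0, L ≥ μ > 0 with κ = L/μ, and set the constant step-size η' = 1/(2L) and ρ = 1 − μ/(2L) = 1 − 1/(2κ). Suppose that for every t ≥ 1, u_{t+1}² ≤ ρ u_t² + 2σ²η'² + 2ε u_{t+1}. Then for every T ≥ 1, u_{T+1} ≤ u_1 (1 − 1/(2κ))^{T/2} + σ/√(μL) + 2ε/(1 − √(1 − 1/(2κ))). In terms of the SSO iterates this reads E‖z_{T+1} − z*‖ ≤ ‖z_1 − z*‖(1 − 1/(2κ))^{T/2} + σ/√(μL) + 2ε/(1 − √(1 − 1/(2κ))). -/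

import Mathlib

lemma sqrt_add_le'' {a b : ℝ} (ha : 0 ≤ a) (hb : 0 ≤ b) :
    Real.sqrt (a + b) ≤ Real.sqrt a + Real.sqrt b := by
  have hsa := Real.sqrt_nonneg a
  have hsb := Real.sqrt_nonneg b
  have h : a + b ≤ (Real.sqrt a + Real.sqrt b) ^ 2 := by
    nlinarith [Real.sq_sqrt ha, Real.sq_sqrt hb, mul_nonneg hsa hsb]
  calc Real.sqrt (a + b) ≤ Real.sqrt ((Real.sqrt a + Real.sqrt b) ^ 2) :=
        Real.sqrt_le_sqrt h
    _ = _ := Real.sqrt_sq (by positivity)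

lemma cross_term {ρ c B D : ℝ} (hρ : 0 ≤ ρ) (hc : 0 ≤ c) (hB : 0 ≤ B) (hD : 0 ≤ D) :
    Real.sqrt (ρ * (B + D) ^ 2 + c) ≤ Real.sqrt (ρ * B ^ 2 + c) + Real.sqrt ρ * D := by
  set s := Real.sqrt ρ with hs
  set q := Real.sqrt (ρ * B ^ 2 + c) with hq
  have hs0 : 0 ≤ s := Real.sqrt_nonneg _
  have hq0 : 0 ≤ q := Real.sqrt_nonneg _
  have hs2 : s ^ 2 = ρ := Real.sq_sqrt hρ
  have hq2 : q ^ 2 = ρ * B ^ 2 + c := Real.sq_sqrt (by positivity)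
  have hsq : ρ * B ≤ s * q := by
    nlinarith [sq_nonneg (s * q - ρ * B), sq_nonneg (s * q + ρ * B),
      mul_nonneg hs0 hq0, mul_nonneg hρ hB]
  have hexp : (q + s * D) ^ 2 = ρ * B ^ 2 + c + 2 * (s * q) * D + ρ * D ^ 2 := by
    linear_combination hq2 + D ^ 2 * hs2
  have h : ρ * (B + D) ^ 2 + c ≤ (q + s * D) ^ 2 := by
    rw [hexp]
    nlinarith [mul_nonneg hD (sub_nonneg.mpr hsq)]
  calc Real.sqrt (ρ * (B + D) ^ 2 + c) ≤ Real.sqrt ((q + s * D) ^ 2) :=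
        Real.sqrt_le_sqrt h
    _ = q + s * D := Real.sqrt_sq (by positivity)

set_option maxHeartbeats 1600000 in
theorem stmt6 (u : ℕ → ℝ) (hu : ∀ t, 0 ≤ u t)
    (σ ε : ℝ) (hσ : 0 ≤ σ) (hε : 0 ≤ ε)
    (L μ : ℝ) (hμ : 0 < μ) (hLμ : μ ≤ L) (κ : ℝ) (hκ : κ = L / μ)
    (hrec : ∀ t, 1 ≤ t →
      u (t + 1) ^ 2 ≤ (1 - μ / (2 * L)) * u t ^ 2 +
        2 * σ ^ 2 * (1 / (2 * L)) ^ 2 + 2 * ε * u (t + 1)) :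
    ∀ T : ℕ, 1 ≤ T →
      u (T + 1) ≤ u 1 * Real.sqrt ((1 - 1 / (2 * κ)) ^ T) + σ / Real.sqrt (μ * L) +
        2 * ε / (1 - Real.sqrt (1 - 1 / (2 * κ))) := by
  have hL : 0 < L := lt_of_lt_of_le hμ hLμ
  have hρdef : 1 - 1 / (2 * κ) = 1 - μ / (2 * L) := by
    rw [hκ]
    field_simp
  obtain ⟨ρ, hρeq⟩ : ∃ ρ : ℝ, ρ = 1 - μ / (2 * L) := ⟨_, rfl⟩
  have hfrac : μ / (2 * L) ≤ 1 / 2 := by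
    rw [div_le_div_iff₀ (by linarith) (by norm_num)]
    linarith
  have hfrac0 : 0 < μ / (2 * L) := by positivity
  have hρ0 : 0 ≤ ρ := by rw [hρeq]; linarith
  have hρ1 : ρ < 1 := by rw [hρeq]; linarith
  obtain ⟨c, hceq⟩ : ∃ c : ℝ, c = 2 * σ ^ 2 * (1 / (2 * L)) ^ 2 := ⟨_, rfl⟩
  have hrec' : ∀ t, 1 ≤ t → u (t + 1) ^ 2 ≤ ρ * u t ^ 2 + c + 2 * ε * u (t + 1) := by
    intro t ht
    have h := hrec t ht
    rw [hρeq, hceq]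
    linarith
  have hc0 : 0 ≤ c := by rw [hceq]; positivity
  obtain ⟨K, hKeq⟩ : ∃ K : ℝ, K = c / (1 - ρ) := ⟨_, rfl⟩
  have h1ρ : 0 < 1 - ρ := by linarith
  have hK0 : 0 ≤ K := by rw [hKeq]; exact div_nonneg hc0 (le_of_lt h1ρ)
  have hsρ1 : Real.sqrt ρ < 1 := by
    rw [show (1:ℝ) = Real.sqrt 1 by simp]
    exact Real.sqrt_lt_sqrt hρ0 hρ1
  have hsρ0 : 0 ≤ Real.sqrt ρ := Real.sqrt_nonneg _
  have h1sρ : 0 < 1 - Real.sqrt ρ := by linarith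
  obtain ⟨D, hDeq⟩ : ∃ D : ℝ, D = 2 * ε / (1 - Real.sqrt ρ) := ⟨_, rfl⟩
  have hD0 : 0 ≤ D := by rw [hDeq]; exact div_nonneg (by linarith) (le_of_lt h1sρ)
  have hDge : 2 * ε ≤ D := by
    rw [hDeq, le_div_iff₀ h1sρ]
    nlinarith
  have hDkey : Real.sqrt ρ * D + 2 * ε = D := by
    have : D * (1 - Real.sqrt ρ) = 2 * ε := by rw [hDeq]; exact div_mul_cancel₀ _ (ne_of_gt h1sρ)
    nlinarith
  have hKkey : ρ * K + c = K := by
    have : K * (1 - ρ) = c := by rw [hKeq]; exact div_mul_cancel₀ _ (ne_of_gt h1ρ)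
    nlinarith
  have hcK : c ≤ K := by
    rw [hKeq, le_div_iff₀ h1ρ]
    nlinarith
  -- per-step bound
  have step : ∀ t, 1 ≤ t → u (t + 1) ≤ Real.sqrt (ρ * u t ^ 2 + c) + 2 * ε := by
    intro t ht
    have h := hrec' t ht
    have hA0 : 0 ≤ ρ * u t ^ 2 + c := add_nonneg (mul_nonneg hρ0 (sq_nonneg _)) hc0
    have h1 : (u (t + 1) - ε) ^ 2 ≤ (ρ * u t ^ 2 + c) + ε ^ 2 := by
      have hexp : (u (t + 1) - ε) ^ 2 = u (t + 1) ^ 2 - 2 * ε * u (t + 1) + ε ^ 2 := by ring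
      rw [hexp]
      linarith
    have h2 : u (t + 1) - ε ≤ Real.sqrt ((ρ * u t ^ 2 + c) + ε ^ 2) := by
      calc u (t + 1) - ε ≤ |u (t + 1) - ε| := le_abs_self _
        _ = Real.sqrt ((u (t + 1) - ε) ^ 2) := (Real.sqrt_sq_eq_abs _).symm
        _ ≤ _ := Real.sqrt_le_sqrt h1
    have h3 : Real.sqrt ((ρ * u t ^ 2 + c) + ε ^ 2) ≤ Real.sqrt (ρ * u t ^ 2 + c) + ε := by
      calc Real.sqrt ((ρ * u t ^ 2 + c) + ε ^ 2)
          ≤ Real.sqrt (ρ * u t ^ 2 + c) + Real.sqrt (ε ^ 2) :=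
            sqrt_add_le'' hA0 (sq_nonneg _)
        _ = Real.sqrt (ρ * u t ^ 2 + c) + ε := by rw [Real.sqrt_sq hε]
    linarith
  -- main invariant by induction
  have main : ∀ T : ℕ, 1 ≤ T → u (T + 1) ≤ Real.sqrt (ρ ^ T * u 1 ^ 2 + K) + D := by
    intro T hT
    induction T with
    | zero => omega
    | succ t ih =>
      by_cases ht : 1 ≤ t
      · have ihh := ih ht
        have hstep := step (t + 1) (by omega)
        set B := Real.sqrt (ρ ^ t * u 1 ^ 2 + K) with hB
        have hB0 : 0 ≤ B := Real.sqrt_nonneg _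
        have hBsq : B ^ 2 = ρ ^ t * u 1 ^ 2 + K := Real.sq_sqrt (add_nonneg (mul_nonneg (pow_nonneg hρ0 t) (sq_nonneg _)) hK0)
        have hmono : Real.sqrt (ρ * u (t + 1) ^ 2 + c) ≤ Real.sqrt (ρ * (B + D) ^ 2 + c) := by
          apply Real.sqrt_le_sqrt
          have hsq2 : u (t + 1) ^ 2 ≤ (B + D) ^ 2 := pow_le_pow_left₀ (hu _) ihh 2
          exact add_le_add_left (mul_le_mul_of_nonneg_left hsq2 hρ0) c
        have hcross := cross_term hρ0 hc0 hB0 hD0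
        have hnext : Real.sqrt (ρ * B ^ 2 + c) ≤ Real.sqrt (ρ ^ (t + 1) * u 1 ^ 2 + K) := by
          apply Real.sqrt_le_sqrt
          rw [hBsq]
          have heq : ρ * (ρ ^ t * u 1 ^ 2 + K) + c = ρ ^ (t + 1) * u 1 ^ 2 + K := by
            linear_combination hKkey
          linarith [heq.le]
        have hρD : Real.sqrt ρ * D + 2 * ε = D := hDkey
        calc u (t + 1 + 1) ≤ Real.sqrt (ρ * u (t + 1) ^ 2 + c) + 2 * ε := hstep
          _ ≤ Real.sqrt (ρ * (B + D) ^ 2 + c) + 2 * ε := by linarith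
          _ ≤ Real.sqrt (ρ * B ^ 2 + c) + Real.sqrt ρ * D + 2 * ε := by linarith
          _ ≤ Real.sqrt (ρ ^ (t + 1) * u 1 ^ 2 + K) + D := by linarith
      · have ht0 : t = 0 := by omega
        subst ht0
        have hstep := step 1 (le_refl 1)
        have hmono : Real.sqrt (ρ * u 1 ^ 2 + c) ≤ Real.sqrt (ρ ^ 1 * u 1 ^ 2 + K) := by
          apply Real.sqrt_le_sqrt
          rw [pow_one]
          linarith
        calc u 2 ≤ Real.sqrt (ρ * u 1 ^ 2 + c) + 2 * ε := hstep
          _ ≤ Real.sqrt (ρ ^ 1 * u 1 ^ 2 + K) + D := by linarith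
  -- conclude
  intro T hT
  have hmain := main T hT
  have hsplit : Real.sqrt (ρ ^ T * u 1 ^ 2 + K) ≤ u 1 * Real.sqrt (ρ ^ T) + Real.sqrt K := by
    calc Real.sqrt (ρ ^ T * u 1 ^ 2 + K)
        ≤ Real.sqrt (ρ ^ T * u 1 ^ 2) + Real.sqrt K :=
          sqrt_add_le'' (mul_nonneg (pow_nonneg hρ0 T) (sq_nonneg _)) hK0
      _ = u 1 * Real.sqrt (ρ ^ T) + Real.sqrt K := by
          rw [Real.sqrt_mul (pow_nonneg hρ0 T), Real.sqrt_sq (hu 1)]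
          ring
  have hKval : K = σ ^ 2 / (μ * L) := by
    rw [hKeq, hceq, hρeq]
    field_simp
    ring
    rw [mul_assoc, mul_inv_cancel₀ hμ.ne', mul_one]
  have hsK : Real.sqrt K = σ / Real.sqrt (μ * L) := by
    rw [hKval, Real.sqrt_div (sq_nonneg σ), Real.sqrt_sq hσ]
  rw [hρdef, ← hρeq]
  rw [hDeq] at hmain
  rw [hsK] at hsplit
  linarith
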